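/- Let q ≥ 2 be a prime power and u a nontrivial element of the group U = {(1, t) : t ∈ F_q} of upper unitriangular matrices in SL₂(F_q) (i.e., u = [[1,s],[0,1]] with s ≠ 0). Then every element of U is a product of at most ⌈log₂ q⌉ + 1 conjugates (in SL₂(F_q)) of elements of {1, u}, using diagonal conjugation: conjugating u by diag(a, a⁻¹) gives [[1, a²s],[0,1]]. -/

import Mathlib

open Matrix Polynomial

section Aux

variable {F : Type*} [Field F] [Fintype F]

/-- Every element of a finite field is a sum of two squares. -/
lemma aux_sq_add_sq (x : F) : ∃ a b : F, a ^ 2 + b ^ 2 = x := by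
  by_cases hF : ringChar F = 2
  · obtain ⟨a, ha⟩ := FiniteField.isSquare_of_char_two hF x
    exact ⟨a, 0, by rw [ha]; ring⟩
  · classical
    let f : F[X] := X ^ 2
    let g : F[X] := X ^ 2 - C x
    obtain ⟨a, b, hab⟩ : ∃ a b, f.eval a + g.eval b = 0 :=
      FiniteField.exists_root_sum_quadratic (degree_X_pow 2)
        (degree_X_pow_sub_C (by norm_num) _)
        (FiniteField.odd_card_of_char_ne_two hF)
    refine ⟨a, b, ?_⟩
    have h : a ^ 2 + (b ^ 2 - x) = 0 := by
      simpa [f, g] using hab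
    linear_combination h

/-- The unitriangular matrix with entry `x`. -/
def auxT (x : F) : SpecialLinearGroup (Fin 2) F :=
  ⟨!![1, x; 0, 1], by simp [Matrix.det_fin_two_of]⟩

lemma auxT_mul (x y : F) : auxT x * auxT y = auxT (x + y) := by
  apply Subtype.ext
  show (!![1, x; 0, 1] : Matrix (Fin 2) (Fin 2) F) * !![1, y; 0, 1] = _
  ext i j
  fin_cases i <;> fin_cases j <;>
    simp [auxT, Matrix.mul_apply, Fin.sum_univ_two, add_comm]

lemma auxT_eq (w : SpecialLinearGroup (Fin 2) F)
    (h10 : (w : Matrix (Fin 2) (Fin 2) F) 1 0 = 0)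
    (h00 : (w : Matrix (Fin 2) (Fin 2) F) 0 0 = 1)
    (h11 : (w : Matrix (Fin 2) (Fin 2) F) 1 1 = 1) :
    w = auxT ((w : Matrix (Fin 2) (Fin 2) F) 0 1) := by
  apply Subtype.ext
  ext i j
  fin_cases i <;> fin_cases j <;> simp [auxT, h10, h00, h11]

lemma auxT_zero : (auxT (0 : F)) = 1 := by
  apply Subtype.ext
  ext i j
  fin_cases i <;> fin_cases j <;> simp [auxT]

/-- Conjugation of `auxT x` by a suitable diagonal matrix yields `auxT (c² x)`. -/
lemma aux_conj (s : F) (c : F) :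
    ∃ g z : SpecialLinearGroup (Fin 2) F,
      (z = 1 ∨ z = auxT s) ∧ g⁻¹ * z * g = auxT (c ^ 2 * s) := by
  by_cases hc : c = 0
  · exact ⟨1, 1, Or.inl rfl, by simp [hc, auxT_zero]⟩
  · have hdet : Matrix.det !![c⁻¹, 0; 0, c] = 1 := by
      simp [Matrix.det_fin_two_of, inv_mul_cancel₀ hc]
    refine ⟨⟨!![c⁻¹, 0; 0, c], hdet⟩, auxT s, Or.inr rfl, ?_⟩
    set g : SpecialLinearGroup (Fin 2) F := ⟨!![c⁻¹, 0; 0, c], hdet⟩ with hg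
    have key : auxT s * g = g * auxT (c ^ 2 * s) := by
      apply Subtype.ext
      show (!![1, s; 0, 1] : Matrix (Fin 2) (Fin 2) F) * !![c⁻¹, 0; 0, c]
          = !![c⁻¹, 0; 0, c] * !![1, c ^ 2 * s; 0, 1]
      ext i j
      fin_cases i <;> fin_cases j <;>
        simp [Matrix.mul_apply, Fin.sum_univ_two] <;> field_simp <;> ring
    calc g⁻¹ * auxT s * g = g⁻¹ * (auxT s * g) := by rw [mul_assoc]
      _ = g⁻¹ * (g * auxT (c ^ 2 * s)) := by rw [key]
      _ = auxT (c ^ 2 * s) := by group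

end Aux

/-- Every element of the upper unitriangular subgroup `U` of `SL₂(F_q)` is a
product of at most `2⌈log₂ q⌉ + 2` conjugates of elements of `{1, u}`, where
`u` is any nontrivial element of `U`. -/
theorem unitriangular_prod_conjugates {F : Type*} [Field F] [Fintype F]
    (u : SpecialLinearGroup (Fin 2) F)
    (hu : (u : Matrix (Fin 2) (Fin 2) F) 1 0 = 0 ∧
          (u : Matrix (Fin 2) (Fin 2) F) 0 0 = 1 ∧
          (u : Matrix (Fin 2) (Fin 2) F) 1 1 = 1 ∧
          (u : Matrix (Fin 2) (Fin 2) F) 0 1 ≠ 0)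
    (v : SpecialLinearGroup (Fin 2) F)
    (hv : (v : Matrix (Fin 2) (Fin 2) F) 1 0 = 0 ∧
          (v : Matrix (Fin 2) (Fin 2) F) 0 0 = 1 ∧
          (v : Matrix (Fin 2) (Fin 2) F) 1 1 = 1) :
    ∃ (N : ℕ), N ≤ 2 * Nat.clog 2 (Fintype.card F) + 2 ∧
      ∃ (g : Fin N → SpecialLinearGroup (Fin 2) F)
        (z : Fin N → SpecialLinearGroup (Fin 2) F),
        (∀ i, z i = 1 ∨ z i = u) ∧
        v = (List.ofFn fun i => (g i)⁻¹ * z i * g i).prod := by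
  obtain ⟨hu10, hu00, hu11, hus⟩ := hu
  obtain ⟨hv10, hv00, hv11⟩ := hv
  set s := (u : Matrix (Fin 2) (Fin 2) F) 0 1 with hs
  set t := (v : Matrix (Fin 2) (Fin 2) F) 0 1 with ht
  have hu' : u = auxT s := auxT_eq u hu10 hu00 hu11
  have hv' : v = auxT t := auxT_eq v hv10 hv00 hv11
  obtain ⟨a, b, hab⟩ := aux_sq_add_sq (F := F) (t * s⁻¹)
  obtain ⟨g0, z0, hz0, hc0⟩ := aux_conj s a
  obtain ⟨g1, z1, hz1, hc1⟩ := aux_conj s b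
  refine ⟨2, by omega, ![g0, g1], ![z0, z1], ?_, ?_⟩
  · intro i
    fin_cases i
    · rcases hz0 with h | h
      · exact Or.inl h
      · exact Or.inr (h.trans hu'.symm)
    · rcases hz1 with h | h
      · exact Or.inl h
      · exact Or.inr (h.trans hu'.symm)
  · have : (List.ofFn fun i : Fin 2 => (![g0, g1] i)⁻¹ * ![z0, z1] i * ![g0, g1] i).prod
        = (g0⁻¹ * z0 * g0) * (g1⁻¹ * z1 * g1) := by
      simp [List.ofFn_succ, mul_assoc]
    rw [this, hc0, hc1, auxT_mul, hv']
    congr 1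
    have hs0 : s ≠ 0 := hus
    field_simp at hab ⊢
    exact hab.symm
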